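/- arXiv:2604.06686 — 2 statements merged into one kernel-verified Lean document; each statement's English description precedes it below -/
import Mathlib

section
/- Let G be a group with finite symmetric generating set S, let H ≤ G be a subgroup, and let A ⊆ G be a subset. Then the following are equivalent: (1) the boundary ∂A = {x ∈ G : x ∉ A and xs ∈ A for some s ∈ S} is contained in finitely many left H-cosets (i.e., H-finite); (2) for every g ∈ G, the set A ∩ (Aᶜ)g = {x : x ∈ A and xg⁻¹ ∉ A} is H-finite. -/
open SimpleGraph

variable {G : Type*} [Group G]

/-- The Cayley graph of `G` with respect to a (symmetric) generating set `S`. -/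
def Cay (S : Finset G) : SimpleGraph G :=
  SimpleGraph.fromRel (fun x y => x⁻¹ * y ∈ S)

/-- A subset `B ⊆ G` is `H`-finite if it is contained in finitely many right cosets
`Hg` (i.e. finitely many orbits of the left multiplication action of `H`). -/
def HFin (H : Subgroup G) (B : Set G) : Prop :=
  ((fun g => Quotient.mk (QuotientGroup.rightRel H) g) '' B).Finite

lemma hfin_mono {H : Subgroup G} {B C : Set G} (h : B ⊆ C) (hC : HFin H C) : HFin H B :=
  hC.subset (Set.image_mono h)

lemma hfin_empty (H : Subgroup G) : HFin H (∅ : Set G) := by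
  simp [HFin]

lemma hfin_union {H : Subgroup G} {B C : Set G} (hB : HFin H B) (hC : HFin H C) :
    HFin H (B ∪ C) := by
  unfold HFin at *
  rw [Set.image_union]
  exact hB.union hC

lemma hfin_translate {H : Subgroup G} {B : Set G} (hB : HFin H B) (g : G) :
    HFin H ((fun x => x * g) '' B) := by
  unfold HFin at *
  have hcomp : ∀ a b, (QuotientGroup.rightRel H) a b → (QuotientGroup.rightRel H) (a * g) (b * g) := by
    intro a b hab
    rw [QuotientGroup.rightRel_apply] at *
    simpa [mul_assoc] using hab
  have : (fun x => Quotient.mk (QuotientGroup.rightRel H) x) '' ((fun x => x * g) '' B)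
      = (Quotient.map (fun x => x * g) hcomp) '' ((fun x => Quotient.mk (QuotientGroup.rightRel H) x) '' B) := by
    simp only [Set.image_image, Quotient.map_mk]
  rw [this]
  exact hB.image _

/-- The boundary `∂A = {x ∉ A : ∃ s ∈ S, xs ∈ A}` is `H`-finite if and only if
`A ∩ Aᶜg` is `H`-finite for every `g ∈ G`. -/
theorem stmt1 (S : Finset G) (hsym : ∀ s ∈ S, s⁻¹ ∈ S)
    (hgen : Subgroup.closure (S : Set G) = ⊤)
    (H : Subgroup G) (A : Set G) :
    HFin H {x : G | x ∉ A ∧ ∃ s ∈ S, x * s ∈ A} ↔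
      ∀ g : G, HFin H {x : G | x ∈ A ∧ x * g⁻¹ ∉ A} := by
  set D : Set G := {x : G | x ∉ A ∧ ∃ s ∈ S, x * s ∈ A} with hD
  constructor
  · intro hb
    -- single generator step
    have step : ∀ s ∈ S, HFin H {x : G | x ∈ A ∧ x * s ∉ A} := by
      intro s hs
      apply hfin_mono (C := (fun x => x * s⁻¹) '' D)
      · intro x hx
        refine ⟨x * s, ⟨hx.2, s⁻¹, hsym s hs, by simpa using hx.1⟩, by simp⟩
      · exact hfin_translate hb _
    have key : ∀ g : G, HFin H {x : G | x ∈ A ∧ x * g ∉ A} ∧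
        HFin H {x : G | x ∈ A ∧ x * g⁻¹ ∉ A} := by
      intro g
      have hg : g ∈ Subgroup.closure (S : Set G) := by rw [hgen]; trivial
      induction hg using Subgroup.closure_induction with
      | mem s hs => exact ⟨step s hs, step s⁻¹ (hsym s hs)⟩
      | one =>
        constructor <;>
          · apply hfin_mono _ (hfin_empty H)
            rintro x ⟨h1, h2⟩
            simp at h2
            exact h2 h1
      | inv x hx ih => exact ⟨ih.2, by simpa using ih.1⟩
      | mul x y hx hy ihx ihy =>
        constructor
        · apply hfin_mono (C := {a : G | a ∈ A ∧ a * x ∉ A} ∪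
            (fun a => a * x⁻¹) '' {a : G | a ∈ A ∧ a * y ∉ A})
          · intro a ha
            by_cases hax : a * x ∈ A
            · exact Or.inr ⟨a * x, ⟨hax, by rw [mul_assoc]; exact ha.2⟩, by simp⟩
            · exact Or.inl ⟨ha.1, hax⟩
          · exact hfin_union ihx.1 (hfin_translate ihy.1 _)
        · apply hfin_mono (C := {a : G | a ∈ A ∧ a * y⁻¹ ∉ A} ∪
            (fun a => a * y) '' {a : G | a ∈ A ∧ a * x⁻¹ ∉ A})
          · intro a ha
            rw [Set.mem_setOf_eq, mul_inv_rev] at ha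
            by_cases hay : a * y⁻¹ ∈ A
            · refine Or.inr ⟨a * y⁻¹, ⟨hay, by rw [mul_assoc]; exact ha.2⟩, by simp⟩
            · exact Or.inl ⟨ha.1, hay⟩
          · exact hfin_union ihy.2 (hfin_translate ihx.2 _)
    exact fun g => (key g).2
  · intro h
    apply hfin_mono (C := ⋃ s ∈ S, (fun x => x * s⁻¹) '' {x : G | x ∈ A ∧ x * s⁻¹ ∉ A})
    · rintro x ⟨hx, s, hs, hxs⟩
      refine Set.mem_biUnion hs ⟨x * s, ⟨hxs, by simpa using hx⟩, by simp⟩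
    · have hh : ∀ s ∈ S, HFin H ((fun x => x * s⁻¹) '' {x : G | x ∈ A ∧ x * s⁻¹ ∉ A}) :=
        fun s _ => hfin_translate (h s) _
      unfold HFin at hh ⊢
      rw [Set.image_iUnion₂]
      exact Set.Finite.biUnion S.finite_toSet hh
end

section
/- In a median graph X, any connected, median-closed subgraph Y is isometrically embedded in X (and is hence itself a median graph). -/
open SimpleGraph

variable {V : Type*}

/-- Triangle condition of weak modularity. -/
def TriangleCond (X : SimpleGraph V) : Prop :=
  ∀ o x y : V, X.Adj x y → X.dist o x = X.dist o y →
    ∃ w : V, X.Adj w x ∧ X.Adj w y ∧ X.dist o w + 1 = X.dist o x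

/-- Quadrangle condition of weak modularity. -/
def QuadCond (X : SimpleGraph V) : Prop :=
  ∀ o x y z : V, X.Adj z x → X.Adj z y → X.dist x y = 2 →
    X.dist o z = X.dist o x + 1 → X.dist o z = X.dist o y + 1 →
    ∃ w : V, X.Adj w x ∧ X.Adj w y ∧ X.dist o w + 2 = X.dist o z

/-- No induced copy of the complete bipartite graph `K_{2,3}`. -/
def NoInducedK23 (X : SimpleGraph V) : Prop :=
  ¬ ∃ a b x y z : V, a ≠ b ∧ x ≠ y ∧ y ≠ z ∧ x ≠ z ∧
    X.Adj a x ∧ X.Adj a y ∧ X.Adj a z ∧ X.Adj b x ∧ X.Adj b y ∧ X.Adj b z ∧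
    ¬ X.Adj a b ∧ ¬ X.Adj x y ∧ ¬ X.Adj y z ∧ ¬ X.Adj x z

/-- No induced copy of `K₄` minus an edge. -/
def NoInducedK4minus (X : SimpleGraph V) : Prop :=
  ¬ ∃ a b c d : V, X.Adj a b ∧ X.Adj a c ∧ X.Adj a d ∧ X.Adj b c ∧ X.Adj b d ∧
    c ≠ d ∧ ¬ X.Adj c d

/-- A quasi-median graph: a connected weakly modular graph with no induced
`K_{2,3}` and no induced `K₄⁻`. -/
def QuasiMedian (X : SimpleGraph V) : Prop :=
  X.Connected ∧ TriangleCond X ∧ QuadCond X ∧ NoInducedK23 X ∧ NoInducedK4minus X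

/-- `m` lies on a geodesic from `a` to `b`. -/
def InInterval (X : SimpleGraph V) (a m b : V) : Prop :=
  X.dist a m + X.dist m b = X.dist a b

/-- `m` is a median of the triple `a, b, c`. -/
def IsMedianOf (X : SimpleGraph V) (m a b c : V) : Prop :=
  InInterval X a m b ∧ InInterval X b m c ∧ InInterval X a m c

/-- A median graph: connected, and every triple of vertices has a unique median. -/
def MedianGraph (X : SimpleGraph V) : Prop :=
  X.Connected ∧ ∀ a b c : V, ∃! m : V, IsMedianOf X m a b c

/-- The elementary relation on edges generating hyperplanes: two edges of a common
triangle, or opposite edges of an induced 4-cycle. -/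
def EdgeRel (X : SimpleGraph V) (e f : Sym2 V) : Prop :=
  (∃ a b c : V, X.Adj a b ∧ X.Adj b c ∧ X.Adj a c ∧ e = s(a, b) ∧ f = s(b, c)) ∨
  (∃ a b c d : V, X.Adj a b ∧ X.Adj b c ∧ X.Adj c d ∧ X.Adj d a ∧
    a ≠ c ∧ ¬ X.Adj a c ∧ b ≠ d ∧ ¬ X.Adj b d ∧ e = s(a, b) ∧ f = s(c, d))

/-- A hyperplane: an equivalence class of edges under the reflexive-transitive
closure of `EdgeRel`. -/
def IsHyperplane (X : SimpleGraph V) (J : Set (Sym2 V)) : Prop :=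
  ∃ e ∈ X.edgeSet, J = {f | Relation.ReflTransGen (EdgeRel X) e f}

/-- The hyperplane `J` separates `x` and `y`. -/
def SeparatesPts (X : SimpleGraph V) (J : Set (Sym2 V)) (x y : V) : Prop :=
  ¬ (X.deleteEdges J).Reachable x y

/-- A sector delimited by `J`: a connected component of `X` minus the edges of `J`. -/
def IsSectorOf (X : SimpleGraph V) (J : Set (Sym2 V)) (S : Set V) : Prop :=
  ∃ v : V, S = {w | (X.deleteEdges J).Reachable v w}

/-- A gated subset of vertices. -/
def IsGated (X : SimpleGraph V) (Y : Set V) : Prop :=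
  Y.Nonempty ∧ ∀ x : V, ∃ y ∈ Y, ∀ z ∈ Y, X.dist x z = X.dist x y + X.dist y z

/-- The gated hull of a set of vertices. -/
def GatedHull (X : SimpleGraph V) (A : Set V) : Set V :=
  ⋂₀ {Y : Set V | IsGated X Y ∧ A ⊆ Y}

/-- A polytope: the gated hull of a non-empty finite set of vertices. -/
def IsPolytope (X : SimpleGraph V) (P : Set V) : Prop :=
  ∃ A : Finset V, A.Nonempty ∧ P = GatedHull X (A : Set V)

/-- `HypOf X Y`: the hyperplanes separating two vertices of `Y` (the hyperplanes
crossing `Y`). -/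
def HypOf (X : SimpleGraph V) (Y : Set V) : Set (Set (Sym2 V)) :=
  {J | IsHyperplane X J ∧ ∃ a ∈ Y, ∃ b ∈ Y, SeparatesPts X J a b}

/-- The hyperplanes separating `A` from `B` (placing them in two distinct sectors). -/
def SepHyp (X : SimpleGraph V) (A B : Set V) : Set (Set (Sym2 V)) :=
  {J | IsHyperplane X J ∧ ∃ S T : Set V, IsSectorOf X J S ∧ IsSectorOf X J T ∧
    S ≠ T ∧ A ⊆ S ∧ B ⊆ T}

/-- The covering relation for polytopes: `P ⊊ Q` with no polytope strictly between. -/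
def PolyCover (X : SimpleGraph V) (P Q : Set V) : Prop :=
  IsPolytope X P ∧ IsPolytope X Q ∧ P ⊂ Q ∧
    ¬ ∃ R : Set V, IsPolytope X R ∧ P ⊂ R ∧ R ⊂ Q

abbrev PolyVert (X : SimpleGraph V) := {P : Set V // IsPolytope X P}

/-- The graph of polytopes: the covering graph of the inclusion poset of polytopes. -/
def PolyGraph (X : SimpleGraph V) : SimpleGraph (PolyVert X) where
  Adj P Q := PolyCover X P.val Q.val ∨ PolyCover X Q.val P.val
  symm := by constructor; intro P Q h; exact h.symm
  loopless := by constructor; intro P h; rcases h with h | h <;> exact (ssubset_irrefl P.val) h.2.2.1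

/-- Two hyperplanes are transverse: there is an induced 4-cycle whose two pairs of
opposite edges belong respectively to the two hyperplanes. -/
def Transverse (X : SimpleGraph V) (J₁ J₂ : Set (Sym2 V)) : Prop :=
  ∃ a b c d : V, X.Adj a b ∧ X.Adj b c ∧ X.Adj c d ∧ X.Adj d a ∧
    a ≠ c ∧ ¬ X.Adj a c ∧ b ≠ d ∧ ¬ X.Adj b d ∧
    s(a, b) ∈ J₁ ∧ s(c, d) ∈ J₁ ∧ s(b, c) ∈ J₂ ∧ s(d, a) ∈ J₂

/-- A prism: a polytope whose crossing hyperplanes are pairwise transverse (this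
characterises the gated subgraphs decomposing as finite products of cliques). -/
def IsPrism (X : SimpleGraph V) (P : Set V) : Prop :=
  IsPolytope X P ∧ ∀ J₁ ∈ HypOf X P, ∀ J₂ ∈ HypOf X P, J₁ ≠ J₂ → Transverse X J₁ J₂

/-- The covering relation for prisms. -/
def PrismCover (X : SimpleGraph V) (P Q : Set V) : Prop :=
  IsPrism X P ∧ IsPrism X Q ∧ P ⊂ Q ∧
    ¬ ∃ R : Set V, IsPrism X R ∧ P ⊂ R ∧ R ⊂ Q

abbrev PrismVert (X : SimpleGraph V) := {P : Set V // IsPrism X P}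

/-- The graph of prisms. -/
def PrismGraph (X : SimpleGraph V) : SimpleGraph (PrismVert X) where
  Adj P Q := PrismCover X P.val Q.val ∨ PrismCover X Q.val P.val
  symm := by constructor; intro P Q h; exact h.symm
  loopless := by constructor; intro P h; rcases h with h | h <;> exact (ssubset_irrefl P.val) h.2.2.1

/-- A convex set of vertices: closed under taking points on geodesics. -/
def IsConvexSet (X : SimpleGraph V) (Y : Set V) : Prop :=
  ∀ a ∈ Y, ∀ b ∈ Y, ∀ m : V, InInterval X a m b → m ∈ Y

/-- The convex hull of a set of vertices. -/
def ConvHull (X : SimpleGraph V) (A : Set V) : Set V :=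
  ⋂₀ {Y : Set V | IsConvexSet X Y ∧ A ⊆ Y}

/-- The subgraph of `X` induced on `Y` (kept on the same vertex set). -/
def RestrictTo (X : SimpleGraph V) (Y : Set V) : SimpleGraph V where
  Adj a b := X.Adj a b ∧ a ∈ Y ∧ b ∈ Y
  symm := by constructor; intro a b h; exact ⟨h.1.symm, h.2.2, h.2.1⟩
  loopless := by constructor; intro a h; exact X.loopless.irrefl a h.1


private lemma induce_le_X {X : SimpleGraph V} {Y : Set V}
    (hconn : (X.induce Y).Connected) (a b : Y) :
    X.dist a.val b.val ≤ (X.induce Y).dist a b := by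
  by_cases h : (X.induce Y).dist a b = 0
  · have : a = b := hconn.dist_eq_zero_iff.mp h
    subst this
    simp [SimpleGraph.dist_self, h]
  · obtain ⟨p, hp⟩ := SimpleGraph.exists_walk_of_dist_ne_zero h
    calc X.dist a.val b.val
        ≤ (p.map (⟨Subtype.val, fun hadj => hadj⟩ : X.induce Y →g X)).length :=
          SimpleGraph.dist_le _
      _ = p.length := SimpleGraph.Walk.length_map _ _
      _ = (X.induce Y).dist a b := hp

private lemma step_lemma (X : SimpleGraph V) (hXc : X.Connected)
    (hXm : ∀ a b c : V, ∃! m : V, IsMedianOf X m a b c) (Y : Set V)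
    (hmed : ∀ a ∈ Y, ∀ b ∈ Y, ∀ c ∈ Y, ∀ m : V, IsMedianOf X m a b c → m ∈ Y)
    (a : V) (ha : a ∈ Y) :
    ∀ (c d : Y) (_ : (X.induce Y).Walk c d), a ≠ d.val →
      X.dist c.val a + X.dist a d.val = X.dist c.val d.val →
      ∃ m ∈ Y, X.Adj a m ∧ X.dist a m + X.dist m d.val = X.dist a d.val := by
  intro c d w
  induction w with
  | nil =>
    intro hab H
    simp only [SimpleGraph.dist_self] at H
    exact absurd ((hXc a _).dist_eq_zero_iff.mp (by omega)) hab
  | @cons c c' d hadj w ih =>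
    intro hab H
    have hcc' : X.Adj c.val c'.val := hadj
    by_cases hc' : X.dist c'.val a + X.dist a d.val = X.dist c'.val d.val
    · exact ih hab hc'
    · obtain ⟨m, hm, _⟩ := hXm a c'.val d.val
      obtain ⟨e1, e2, e3⟩ := hm
      have hma : m ≠ a := by
        intro he
        subst he
        exact hc' (by
          have h1 : X.dist c'.val m = X.dist m c'.val := SimpleGraph.dist_comm
          unfold InInterval at e2
          omega)
      have d1 : X.dist a c'.val ≤ X.dist a c.val + 1 := by
        have := hXc.dist_triangle (u := a) (v := c.val) (w := c'.val)
        have h1 : X.dist c.val c'.val = 1 := SimpleGraph.dist_eq_one_iff_adj.mpr hcc'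
        omega
      have d2 : X.dist c.val d.val ≤ 1 + X.dist c'.val d.val := by
        have := hXc.dist_triangle (u := c.val) (v := c'.val) (w := d.val)
        have h1 : X.dist c.val c'.val = 1 := SimpleGraph.dist_eq_one_iff_adj.mpr hcc'
        omega
      have hcomm1 : X.dist c.val a = X.dist a c.val := SimpleGraph.dist_comm
      have hcomm2 : X.dist m c'.val = X.dist c'.val m := SimpleGraph.dist_comm
      unfold InInterval at e1 e2 e3
      have hd1 : 1 ≤ X.dist a m := hXc.pos_dist_of_ne (fun h => hma h.symm)
      have hd : X.dist a m = 1 := by omega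
      refine ⟨m, hmed a ha c'.val c'.2 d.val d.2 m ⟨e1, e2, e3⟩, ?_, e3⟩
      exact SimpleGraph.dist_eq_one_iff_adj.mp hd

private lemma induce_dist_le (X : SimpleGraph V) (hXc : X.Connected)
    (hXm : ∀ a b c : V, ∃! m : V, IsMedianOf X m a b c) (Y : Set V)
    (hconn : (X.induce Y).Connected)
    (hmed : ∀ a ∈ Y, ∀ b ∈ Y, ∀ c ∈ Y, ∀ m : V, IsMedianOf X m a b c → m ∈ Y) :
    ∀ (n : ℕ) (a b : V) (ha : a ∈ Y) (hb : b ∈ Y), X.dist a b = n →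
      (X.induce Y).dist ⟨a, ha⟩ ⟨b, hb⟩ ≤ n := by
  intro n
  induction n using Nat.strong_induction_on with
  | _ n ih =>
    intro a b ha hb hn
    by_cases hab : a = b
    · subst hab
      simp [SimpleGraph.dist_self]
    · obtain ⟨w⟩ := hconn ⟨a, ha⟩ ⟨b, hb⟩
      obtain ⟨m, hmY, hadj, heq⟩ := step_lemma X hXc hXm Y hmed a ha ⟨a, ha⟩ ⟨b, hb⟩ w hab
        (by simp [SimpleGraph.dist_self])
      have hd : X.dist a m = 1 := SimpleGraph.dist_eq_one_iff_adj.mpr hadj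
      have heq' : X.dist a m + X.dist m b = X.dist a b := heq
      have hmb : X.dist m b = n - 1 ∧ 1 ≤ n := by omega
      have hIH : (X.induce Y).dist ⟨m, hmY⟩ ⟨b, hb⟩ ≤ n - 1 :=
        ih (n - 1) (by omega) m b hmY hb hmb.1
      have htri := hconn.dist_triangle (u := (⟨a, ha⟩ : Y)) (v := ⟨m, hmY⟩) (w := ⟨b, hb⟩)
      have ham : (X.induce Y).dist ⟨a, ha⟩ ⟨m, hmY⟩ = 1 :=
        SimpleGraph.dist_eq_one_iff_adj.mpr hadj
      omega

private lemma induce_dist_eq (X : SimpleGraph V) (hXc : X.Connected)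
    (hXm : ∀ a b c : V, ∃! m : V, IsMedianOf X m a b c) (Y : Set V)
    (hconn : (X.induce Y).Connected)
    (hmed : ∀ a ∈ Y, ∀ b ∈ Y, ∀ c ∈ Y, ∀ m : V, IsMedianOf X m a b c → m ∈ Y)
    (a b : Y) : (X.induce Y).dist a b = X.dist a.val b.val :=
  le_antisymm
    (by
      obtain ⟨a, ha⟩ := a; obtain ⟨b, hb⟩ := b
      exact induce_dist_le X hXc hXm Y hconn hmed (X.dist a b) a b ha hb rfl)
    (induce_le_X hconn a b)

/-- In a median graph, any connected median-closed subgraph is isometrically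
embedded, and is hence itself a median graph. -/
theorem stmt3 (X : SimpleGraph V) (hX : MedianGraph X) (Y : Set V)
    (hne : Y.Nonempty)
    (hconn : (X.induce Y).Connected)
    (hmed : ∀ a ∈ Y, ∀ b ∈ Y, ∀ c ∈ Y, ∀ m : V, IsMedianOf X m a b c → m ∈ Y) :
    (∀ a b : Y, (X.induce Y).dist a b = X.dist a.val b.val) ∧
      MedianGraph (X.induce Y) := by
  have hXc := hX.1
  have hXm := hX.2
  have isod : ∀ a b : Y, (X.induce Y).dist a b = X.dist a.val b.val :=
    induce_dist_eq X hXc hXm Y hconn hmed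
  refine ⟨isod, hconn, ?_⟩
  intro a b c
  obtain ⟨m, hm, huniq⟩ := hXm a.val b.val c.val
  have hmY : m ∈ Y := hmed a.val a.2 b.val b.2 c.val c.2 m hm
  refine ⟨⟨m, hmY⟩, ?_, ?_⟩
  · obtain ⟨e1, e2, e3⟩ := hm
    exact ⟨by unfold InInterval; rw [isod, isod, isod]; exact e1,
      by unfold InInterval; rw [isod, isod, isod]; exact e2,
      by unfold InInterval; rw [isod, isod, isod]; exact e3⟩
  · intro m' hm'
    obtain ⟨e1, e2, e3⟩ := hm'
    unfold InInterval at e1 e2 e3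
    rw [isod, isod, isod] at e1 e2 e3
    exact Subtype.ext (huniq m'.val ⟨e1, e2, e3⟩)
end
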